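/- Let γ, μ, τ > 0 and A, Q ∈ ℝ with Q = 0 and A ≠ 0, and suppose ω > 0 satisfies Δ(iω) = 0. Then γ ≠ μ, 2A(γ − μ) = ω² + γ², and in particular A(γ − μ) > 0, so that γ < μ if A < 0 and γ > μ if A > 0. -/

import Mathlib

/-- The characteristic function `Δ(λ) = λ + γ - A - (Q - A) e^{-λτ} - μA ∫_{-τ}^0 e^{λs} ds`
of the linearization of the threshold delay equation at a steady state. -/
noncomputable def charFun (γ μ τ A Q : ℝ) (lam : ℂ) : ℂ :=
  lam + (γ : ℂ) - (A : ℂ) - ((Q : ℂ) - (A : ℂ)) * Complex.exp (-lam * (τ : ℂ)) -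
    (μ : ℂ) * (A : ℂ) * ∫ s in (-τ)..(0 : ℝ), Complex.exp (lam * (s : ℂ))

/-- If `Q = 0`, `A ≠ 0` and `ω > 0` satisfies `Δ(iω) = 0`, then
`γ ≠ μ`, `2A(γ - μ) = ω² + γ²`, hence `A(γ - μ) > 0`; so `γ < μ` if `A < 0` and
`γ > μ` if `A > 0`. -/
theorem charFun_hopf_identity
    (γ μ τ A Q : ℝ) (hγ : 0 < γ) (hμ : 0 < μ) (hτ : 0 < τ)
    (hQ : Q = 0) (hA : A ≠ 0) (ω : ℝ) (hω : 0 < ω)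
    (hroot : charFun γ μ τ A Q (Complex.I * (ω : ℂ)) = 0) :
    γ ≠ μ ∧ 2 * A * (γ - μ) = ω ^ 2 + γ ^ 2 ∧ 0 < A * (γ - μ) ∧
    (A < 0 → γ < μ) ∧ (0 < A → μ < γ) := by
  have hωC : ((ω:ℂ)) ≠ 0 := by exact_mod_cast hω.ne'
  have hIω : (Complex.I * (ω:ℂ)) ≠ 0 := mul_ne_zero Complex.I_ne_zero hωC
  unfold charFun at hroot
  rw [integral_exp_mul_complex hIω, hQ] at hroot
  field_simp at hroot
  have hE : Complex.exp (-(Complex.I * (ω:ℂ) * (τ:ℂ))) =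
      ((Real.cos (ω*τ) : ℝ) : ℂ) - ((Real.sin (ω*τ) : ℝ):ℂ) * Complex.I := by
    rw [show -(Complex.I * (ω:ℂ) * (τ:ℂ)) = ((-(ω*τ):ℝ):ℂ) * Complex.I by push_cast; ring,
      Complex.exp_mul_I]
    push_cast
    rw [Complex.cos_neg, Complex.sin_neg]
    ring
  set c := Real.cos (ω*τ) with hc
  set s := Real.sin (ω*τ) with hs
  rw [hE, Complex.ext_iff] at hroot
  simp [Complex.add_re, Complex.mul_re, Complex.mul_im] at hroot
  obtain ⟨h1, h2⟩ := hroot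
  simp only [hE, Complex.sub_re, Complex.sub_im, Complex.ofReal_re, Complex.ofReal_im,
    Complex.mul_re, Complex.mul_im, Complex.I_re, Complex.I_im] at h1 h2
  have hpyth : s^2 + c^2 = 1 := by rw [hs, hc]; exact Real.sin_sq_add_cos_sq _
  -- the key identity
  have key : 2 * A * (γ - μ) = ω ^ 2 + γ ^ 2 := by
    have e1 : A*(1-c)*(ω^2+μ^2) = ω^2*(γ-μ) := by linear_combination (-ω)*h2 + (-μ)*h1
    have e2 : A*s*(ω^2+μ^2) = ω*(ω^2+γ*μ) := by linear_combination ω*h1 - μ*h2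
    have e3 : (A*(1-c))^2 + (A*s)^2 = 2*A*(A*(1-c)) := by linear_combination (A^2)*hpyth
    have hbig : (2*A*(γ-μ) - (ω^2+γ^2)) * (ω^2*(ω^2+μ^2)) = 0 := by
      linear_combination (A*(1-c)*(ω^2+μ^2) + ω^2*(γ-μ) - 2*A*(ω^2+μ^2))*e1
        + (A*s*(ω^2+μ^2) + ω*(ω^2+γ*μ))*e2 - (ω^2+μ^2)^2*e3
    have hpos : 0 < ω^2*(ω^2+μ^2) := by positivity
    rcases mul_eq_zero.mp hbig with h | h
    · linarith
    · exact absurd h hpos.ne'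
  have hApos : 0 < A * (γ - μ) := by nlinarith [sq_nonneg ω, sq_nonneg γ]
  refine ⟨?_, key, hApos, ?_, ?_⟩
  · intro h
    rw [h] at hApos
    simp at hApos
  · intro hA'
    nlinarith
  · intro hA'
    nlinarith
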